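/- Let p > 3 be prime, a ∈ F_p, and c ∈ F_p nonzero. For S_λ = Σ_{x ∈ F_p} σ(x³ + a x² + λ x + c), the variance of (S_λ)_{λ∈F_p} equals p − 1 − σ(−1) − n₃ + σ(c)·Σ_{x ∈ F_p} σ(x³ + a x² − 4c), where n₃ is the number of x ∈ F_p with x³ + a x² − 4c = 0. -/

import Mathlib

open Finset

section
variable {p : ℕ} [Fact p.Prime]

local notation "σ" => quadraticChar (ZMod p)

lemma my_hF (hp : 3 < p) : ringChar (ZMod p) ≠ 2 := by
  rw [ZMod.ringChar_zmod_n]; omega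

lemma my_two (hp : 3 < p) : (2 : ZMod p) ≠ 0 := by
  have : ((2 : ℕ) : ZMod p) ≠ 0 := by
    rw [Ne, ZMod.natCast_eq_zero_iff]
    intro h
    have := Nat.le_of_dvd (by norm_num) h
    omega
  simpa using this

lemma my_sum0 (hp : 3 < p) : ∑ x : ZMod p, σ x = 0 :=
  quadraticChar_sum_zero (my_hF hp)

lemma my_affine (hp : 3 < p) {m : ZMod p} (hm : m ≠ 0) (b : ZMod p) :
    ∑ x : ZMod p, σ (m * x + b) = 0 := by
  have hbij : Function.Bijective (fun x : ZMod p => m * x + b) := by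
    constructor
    · intro x y h
      simp only [add_left_inj] at h
      exact mul_left_cancel₀ hm h
    · intro t
      exact ⟨m⁻¹ * (t - b), by field_simp; ring⟩
  rw [Fintype.sum_bijective _ hbij (fun x => (σ (m * x + b) : ℤ)) (fun t => (σ t : ℤ))
    (fun x => rfl)]
  exact my_sum0 hp

lemma my_sq1 {x : ZMod p} (hx : x ≠ 0) : σ (x * x) = 1 := by
  rw [← sq]; exact quadraticChar_sq_one' hx

lemma my_sumsq (hp : 3 < p) : ∑ x : ZMod p, σ (x * x) = (p : ℤ) - 1 := by
  have h : ∀ x : ZMod p, σ (x * x) = 1 - (if x = 0 then (1 : ℤ) else 0) := by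
    intro x
    by_cases hx : x = 0
    · simp [hx]
    · simp [hx, my_sq1 hx]
  rw [Finset.sum_congr rfl fun x _ => h x, Finset.sum_sub_distrib]
  simp [ZMod.card]

lemma my_quadcount (hp : 3 < p) (s q : ZMod p) :
    ((univ.filter fun x : ZMod p => x * (s - x) = q).card : ℤ) = 1 + σ (s ^ 2 - 4 * q) := by
  have h2 : (2 : ZMod p) ≠ 0 := by
    have : ((2 : ℕ) : ZMod p) ≠ 0 := by
      rw [Ne, ZMod.natCast_eq_zero_iff]
      intro h; have := Nat.le_of_dvd (by norm_num) h; omega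
    simpa using this
  have hF : ringChar (ZMod p) ≠ 2 := by rw [ZMod.ringChar_zmod_n]; omega
  have hsq := quadraticChar_card_sqrts hF (s ^ 2 - 4 * q)
  have hset : ({x : ZMod p | x ^ 2 = s ^ 2 - 4 * q}).toFinset
      = univ.filter (fun x : ZMod p => x ^ 2 = s ^ 2 - 4 * q) := by
    ext x; simp
  rw [hset] at hsq
  rw [add_comm] at hsq
  rw [← hsq]
  norm_cast
  apply Finset.card_bij' (fun x _ => 2 * x - s) (fun t _ => 2⁻¹ * (t + s))
  · intro x hx
    simp only [mem_filter, mem_univ, true_and] at hx ⊢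
    linear_combination (-4 : ZMod p) * hx
  · intro t ht
    simp only [mem_filter, mem_univ, true_and] at ht ⊢
    have h22 : (2 : ZMod p) * 2⁻¹ = 1 := mul_inv_cancel₀ h2
    linear_combination (-(2⁻¹:ZMod p)^2) * ht + (-(2⁻¹:ZMod p)*t*s - 2⁻¹*s^2 + (2*2⁻¹+1)*q) * h22
  · intro x hx
    have h22 : (2 : ZMod p) * 2⁻¹ = 1 := mul_inv_cancel₀ h2
    field_simp
    ring
  · intro t ht
    have h22 : (2 : ZMod p) * 2⁻¹ = 1 := mul_inv_cancel₀ h2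
    field_simp
    ring
lemma my_musum (hp : 3 < p) {w : ZMod p} (hw : w ≠ 0) :
    ∑ μ : ZMod p, σ (μ * (μ + w)) = -1 := by
  have hs0 : ∑ x : ZMod p, σ x = 0 := quadraticChar_sum_zero (by rw [ZMod.ringChar_zmod_n]; omega)
  have step1 : ∀ μ : ZMod p, σ (μ * (μ + w)) =
      if μ = 0 then 0 else σ (1 + w * μ⁻¹) := by
    intro μ
    by_cases hμ : μ = 0
    · simp [hμ]
    · have : μ * (μ + w) = (μ * μ) * (1 + w * μ⁻¹) := by field_simp
      rw [if_neg hμ, this, map_mul]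
      rw [← sq, quadraticChar_sq_one' hμ, one_mul]
  rw [Finset.sum_congr rfl fun μ _ => step1 μ]
  rw [← Finset.sum_erase_add univ _ (Finset.mem_univ (0 : ZMod p))]
  rw [if_pos rfl, add_zero]
  have step2 : ∑ μ ∈ univ.erase (0 : ZMod p), (if μ = 0 then 0 else σ (1 + w * μ⁻¹))
      = ∑ μ ∈ univ.erase (0 : ZMod p), σ (1 + w * μ⁻¹) := by
    apply Finset.sum_congr rfl
    intro μ hμ
    rw [if_neg (Finset.ne_of_mem_erase hμ)]
  rw [step2]
  have step3 : ∑ μ ∈ univ.erase (0 : ZMod p), σ (1 + w * μ⁻¹)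
      = ∑ t ∈ univ.erase (1 : ZMod p), σ t := by
    apply Finset.sum_bij' (fun μ _ => 1 + w * μ⁻¹) (fun t _ => w * (t - 1)⁻¹)
    · intro μ hμ
      have hμ0 := Finset.ne_of_mem_erase hμ
      simp only [Finset.mem_erase, Finset.mem_univ, and_true]
      intro h
      have h' : w * μ⁻¹ = 0 := by linear_combination h
      rcases mul_eq_zero.mp h' with h'' | h''
      · exact hw h''
      · exact hμ0 (inv_eq_zero.mp h'')
    · intro t ht
      have ht1 := Finset.ne_of_mem_erase ht
      simp only [Finset.mem_erase, Finset.mem_univ, and_true]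
      intro h
      rcases mul_eq_zero.mp h with h'' | h''
      · exact hw h''
      · exact ht1 (by
          have : t - 1 = 0 := inv_eq_zero.mp h''
          linear_combination this)
    · intro μ hμ
      have hμ0 := Finset.ne_of_mem_erase hμ
      have : (1 : ZMod p) + w * μ⁻¹ - 1 = w * μ⁻¹ := by ring
      rw [this]
      rw [mul_inv_rev, inv_inv]
      field_simp
    · intro t ht
      have ht1 := Finset.ne_of_mem_erase ht
      have hne : t - 1 ≠ 0 := sub_ne_zero.mpr ht1
      rw [mul_inv_rev, inv_inv]
      field_simp
      ring
    · intro μ hμ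
      rfl
  rw [step3]
  have h4 := Finset.sum_erase_add univ (fun t => (σ t : ℤ)) (Finset.mem_univ (1 : ZMod p))
  rw [hs0] at h4
  have h5 : (σ (1 : ZMod p) : ℤ) = 1 := map_one _
  simp only [h5] at h4
  linarith [h4]

lemma my_L4 (hp : 3 < p) {x y : ZMod p} (hx : x ≠ 0) (hy : y ≠ 0) (u v : ZMod p) :
    ∑ l : ZMod p, σ ((x * l + u) * (y * l + v))
      = σ (x * y) * (if v * x = u * y then (p : ℤ) - 1 else -1) := by
  set w : ZMod p := y⁻¹ * v - x⁻¹ * u with hw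
  have hbij : Function.Bijective (fun μ : ZMod p => μ - u * x⁻¹) :=
    (Equiv.subRight (u * x⁻¹)).bijective
  have key : ∀ μ : ZMod p,
      σ ((x * (μ - u * x⁻¹) + u) * (y * (μ - u * x⁻¹) + v)) = σ (x * y) * σ (μ * (μ + w)) := by
    intro μ
    have hxx : x * x⁻¹ = 1 := mul_inv_cancel₀ hx
    have hyy : y * y⁻¹ = 1 := mul_inv_cancel₀ hy
    have e1 : x * (μ - u * x⁻¹) + u = x * μ := by linear_combination (-u) * hxx
    have e2 : y * (μ - u * x⁻¹) + v = y * (μ + w) := by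
      rw [hw]; linear_combination (-v) * hyy
    rw [e1, e2, show x * μ * (y * (μ + w)) = (x * y) * (μ * (μ + w)) by ring, map_mul]
  have hsum := Fintype.sum_bijective _ hbij
    (fun μ => ((σ (x * y) : ℤ) * σ (μ * (μ + w)))) (fun l => (σ ((x * l + u) * (y * l + v)) : ℤ))
    (fun μ => (key μ).symm)
  rw [← hsum, ← Finset.mul_sum]
  congr 1
  have hcond : (v * x = u * y) ↔ w = 0 := by
    rw [hw]
    constructor
    · intro h
      have : y⁻¹ * v - x⁻¹ * u = (x * y)⁻¹ * (v * x - u * y) := by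
        rw [mul_inv_rev]; field_simp
      rw [this, h]; ring
    · intro h
      have h' : (x * y) * (y⁻¹ * v - x⁻¹ * u) = v * x - u * y := by field_simp
      rw [h, mul_zero] at h'
      linear_combination -h'
  by_cases hvc : v * x = u * y
  · rw [if_pos hvc]
    rw [hcond] at hvc
    simp only [hvc, add_zero]
    exact my_sumsq hp
  · rw [if_neg hvc]
    rw [hcond] at hvc  -- hvc : ¬ w = 0
    exact my_musum hp hvc

lemma my_P (hp : 3 < p) (a c : ZMod p) (hc : c ≠ 0) :
    ∑ x : ZMod p, ∑ y : ZMod p, (σ (x * y) : ℤ) * (if x * y * (x + y + a) - c = 0 then 1 else 0)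
      = σ c * (∑ s : ZMod p, σ (s ^ 3 + a * s ^ 2 - 4 * c)) - σ (-1) := by
  have h2 : (2 : ZMod p) ≠ 0 := by
    have : ((2 : ℕ) : ZMod p) ≠ 0 := by
      rw [Ne, ZMod.natCast_eq_zero_iff]
      intro h; have := Nat.le_of_dvd (by norm_num) h; omega
    simpa using this
  -- reindex inner sum y = s - x
  have step1 : ∀ x : ZMod p,
      ∑ y : ZMod p, (σ (x * y) : ℤ) * (if x * y * (x + y + a) - c = 0 then 1 else 0)
      = ∑ s : ZMod p, (σ (x * (s - x)) : ℤ) * (if x * (s - x) * (s + a) - c = 0 then 1 else 0) := by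
    intro x
    refine (Fintype.sum_bijective (fun s : ZMod p => s - x) (Equiv.subRight x).bijective _ _ ?_).symm
    intro s
    have : x + (s - x) + a = s + a := by ring
    simp only [this]
  rw [Finset.sum_congr rfl fun x _ => step1 x, Finset.sum_comm]
  -- per-s evaluation
  have claim : ∀ s : ZMod p,
      ∑ x : ZMod p, (σ (x * (s - x)) : ℤ) * (if x * (s - x) * (s + a) - c = 0 then 1 else 0)
      = σ c * (σ (s + a) + σ (s + a) ^ 2 * σ (s ^ 3 + a * s ^ 2 - 4 * c)) := by
    intro s
    by_cases hsa : s + a = 0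
    · have hz : ∀ x : ZMod p, (σ (x * (s - x)) : ℤ) * (if x * (s - x) * (s + a) - c = 0 then 1 else 0) = 0 := by
        intro x
        rw [if_neg (fun h => hc (by linear_combination -h + (x * (s - x)) * hsa)), mul_zero]
      rw [Finset.sum_eq_zero (fun x _ => hz x), hsa]
      simp
    · set q : ZMod p := c * (s + a)⁻¹ with hqdef
      have hq : q * (s + a) = c := by rw [hqdef]; field_simp
      have pointwise : ∀ x : ZMod p,
          (σ (x * (s - x)) : ℤ) * (if x * (s - x) * (s + a) - c = 0 then 1 else 0)
          = (σ q : ℤ) * (if x * (s - x) = q then 1 else 0) := by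
        intro x
        by_cases hcnd : x * (s - x) = q
        · rw [if_pos hcnd, if_pos (by rw [hcnd]; linear_combination hq), hcnd]
        · rw [if_neg hcnd, if_neg ?_, mul_zero, mul_zero]
          intro h
          apply hcnd
          have : x * (s - x) * ((s + a) * (s + a)⁻¹) = c * (s + a)⁻¹ := by
            rw [← mul_assoc]
            rw [show x * (s - x) * (s + a) = c by linear_combination h]
          rwa [mul_inv_cancel₀ hsa, mul_one] at this
      rw [Finset.sum_congr rfl fun x _ => pointwise x, ← Finset.mul_sum]
      have hcount : ∑ x : ZMod p, (if x * (s - x) = q then (1 : ℤ) else 0)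
          = 1 + σ (s ^ 2 - 4 * q) := by
        rw [Finset.sum_boole]
        exact_mod_cast my_quadcount hp s q
      rw [hcount]
      have hsq : (σ (s + a) : ℤ) ^ 2 = 1 := quadraticChar_sq_one hsa
      have hq1 : (σ q : ℤ) * σ (s + a) = σ c := by rw [← map_mul, hq]
      have hq2 : (σ (s ^ 2 - 4 * q) : ℤ) * σ (s + a) = σ (s ^ 3 + a * s ^ 2 - 4 * c) := by
        rw [← map_mul]
        congr 1
        linear_combination (-4 : ZMod p) * hq
      have hq3 : (σ q : ℤ) = σ c * σ (s + a) := by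
        linear_combination (σ (s + a) : ℤ) * hq1 - (σ q : ℤ) * hsq
      have hq4 : (σ (s ^ 2 - 4 * q) : ℤ) = σ (s ^ 3 + a * s ^ 2 - 4 * c) * σ (s + a) := by
        linear_combination (σ (s + a) : ℤ) * hq2 - (σ (s ^ 2 - 4 * q) : ℤ) * hsq
      rw [hq3, hq4]
      ring
  rw [Finset.sum_congr rfl fun s _ => claim s]
  -- now sum the closed form
  have h5 : ∑ s : ZMod p, (σ (s + a) : ℤ) = 0 := by
    have := my_affine hp (one_ne_zero : (1 : ZMod p) ≠ 0) a
    simpa using this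
  have h6 : ∑ s : ZMod p, (σ (s + a) : ℤ) ^ 2 * σ (s ^ 3 + a * s ^ 2 - 4 * c)
      = (∑ s : ZMod p, (σ (s ^ 3 + a * s ^ 2 - 4 * c) : ℤ)) - σ (-4 * c) := by
    have pw : ∀ s : ZMod p, (σ (s + a) : ℤ) ^ 2 * σ (s ^ 3 + a * s ^ 2 - 4 * c)
        = σ (s ^ 3 + a * s ^ 2 - 4 * c) - (if s = -a then (σ (-4 * c) : ℤ) else 0) := by
      intro s
      by_cases hs : s = -a
      · subst hs
        have hz : (-a : ZMod p) + a = 0 := by ring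
        have hg : (-a : ZMod p) ^ 3 + a * (-a) ^ 2 - 4 * c = -4 * c := by ring
        rw [hz, hg, if_pos rfl]
        simp
      · have hsa : s + a ≠ 0 := fun h => hs (by linear_combination h)
        rw [if_neg hs]
        have : (σ (s + a) : ℤ) ^ 2 = 1 := quadraticChar_sq_one hsa
        rw [this]; ring
    rw [Finset.sum_congr rfl fun s _ => pw s, Finset.sum_sub_distrib]
    congr 1
    simp
  calc ∑ s : ZMod p, (σ c : ℤ) * (σ (s + a) + σ (s + a) ^ 2 * σ (s ^ 3 + a * s ^ 2 - 4 * c))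
      = σ c * ∑ s : ZMod p, ((σ (s + a) : ℤ) + σ (s + a) ^ 2 * σ (s ^ 3 + a * s ^ 2 - 4 * c)) := by
        rw [Finset.mul_sum]
    _ = σ c * ((∑ s : ZMod p, (σ (s + a) : ℤ))
          + ∑ s : ZMod p, (σ (s + a) : ℤ) ^ 2 * σ (s ^ 3 + a * s ^ 2 - 4 * c)) := by
        rw [Finset.sum_add_distrib]
    _ = σ c * (∑ s : ZMod p, (σ (s ^ 3 + a * s ^ 2 - 4 * c) : ℤ)) - σ c * σ (-4 * c) := by
        rw [h5, h6]; ring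
    _ = σ c * (∑ s : ZMod p, (σ (s ^ 3 + a * s ^ 2 - 4 * c) : ℤ)) - σ (-1) := by
        congr 1
        rw [← map_mul, show c * (-4 * c) = -1 * (2 * c) ^ 2 by ring, map_mul,
          quadraticChar_sq_one' (mul_ne_zero h2 hc), mul_one]

lemma my_card3 (hp : 3 < p) (a c : ZMod p) :
    (univ.filter fun x : ZMod p => x * x * (x + x + a) - c = 0).card
      = (univ.filter fun X : ZMod p => X ^ 3 + a * X ^ 2 - 4 * c = 0).card := by
  have h2 : (2 : ZMod p) ≠ 0 := by
    have : ((2 : ℕ) : ZMod p) ≠ 0 := by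
      rw [Ne, ZMod.natCast_eq_zero_iff]
      intro h; have := Nat.le_of_dvd (by norm_num) h; omega
    simpa using this
  have h22 : (2 : ZMod p) * 2⁻¹ = 1 := mul_inv_cancel₀ h2
  apply Finset.card_bij' (fun x _ => 2 * x) (fun X _ => 2⁻¹ * X)
  · intro x hx
    rw [← mul_assoc, inv_mul_cancel₀ h2, one_mul]
  · intro X hX
    rw [← mul_assoc, mul_inv_cancel₀ h2, one_mul]
  · intro x hx
    simp only [mem_filter, mem_univ, true_and] at hx ⊢
    linear_combination (4 : ZMod p) * hx
  · intro X hX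
    simp only [mem_filter, mem_univ, true_and] at hX ⊢
    linear_combination (2 * (2⁻¹ : ZMod p) ^ 3) * hX
      + (-(a * (2⁻¹ : ZMod p) ^ 2) * X ^ 2 + (4 * (2⁻¹ : ZMod p) ^ 2 + 2 * (2⁻¹ : ZMod p) + 1) * c) * h22

lemma my_T (hp : 3 < p) (a c : ZMod p) (hc : c ≠ 0) :
    ∑ l : ZMod p, (∑ x : ZMod p, σ (x ^ 3 + a * x ^ 2 + l * x + c)) ^ 2
      = (p : ℤ) * p
        + p * (σ c * ∑ x : ZMod p, σ (x ^ 3 + a * x ^ 2 - 4 * c))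
        - p * σ (-1)
        - p * ((univ.filter fun x : ZMod p => x ^ 3 + a * x ^ 2 - 4 * c = 0).card : ℤ) := by
  have expand : ∀ l : ZMod p, (∑ x : ZMod p, (σ (x ^ 3 + a * x ^ 2 + l * x + c) : ℤ)) ^ 2
      = ∑ x : ZMod p, ∑ y : ZMod p,
          (σ ((x ^ 3 + a * x ^ 2 + l * x + c) * (y ^ 3 + a * y ^ 2 + l * y + c)) : ℤ) := by
    intro l
    rw [sq, Finset.sum_mul_sum]
    exact Finset.sum_congr rfl fun x _ => Finset.sum_congr rfl fun y _ => (map_mul _ _ _).symm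
  rw [Finset.sum_congr rfl fun l _ => expand l]
  rw [Finset.sum_comm]
  rw [Finset.sum_congr rfl fun x (_ : x ∈ univ) => Finset.sum_comm]
  -- pointwise evaluation of the inner l-sum
  have hFR : ∀ x y : ZMod p,
      (∑ l : ZMod p, (σ ((x ^ 3 + a * x ^ 2 + l * x + c) * (y ^ 3 + a * y ^ 2 + l * y + c)) : ℤ))
      = (-(σ (x * y) : ℤ)
          + (p : ℤ) * ((σ (x * y) : ℤ) * (if (x - y) * (x * y * (x + y + a) - c) = 0 then 1 else 0)))
        + (if x = 0 ∧ y = 0 then (p : ℤ) else 0) := by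
    intro x y
    by_cases hx : x = 0 <;> by_cases hy : y = 0
    · subst hx; subst hy
      have harg : ∀ l : ZMod p,
          ((0 : ZMod p) ^ 3 + a * 0 ^ 2 + l * 0 + c) * ((0 : ZMod p) ^ 3 + a * 0 ^ 2 + l * 0 + c)
            = c * c := by intro l; ring
      rw [Finset.sum_congr rfl fun l _ => congrArg (fun t => (σ t : ℤ)) (harg l)]
      simp [my_sq1 hc, ZMod.card]
    · subst hx
      have harg : ∀ l : ZMod p,
          ((0 : ZMod p) ^ 3 + a * 0 ^ 2 + l * 0 + c) * (y ^ 3 + a * y ^ 2 + l * y + c)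
            = (c * y) * l + c * (y ^ 3 + a * y ^ 2 + c) := by intro l; ring
      rw [Finset.sum_congr rfl fun l _ => congrArg (fun t => (σ t : ℤ)) (harg l)]
      rw [my_affine hp (mul_ne_zero hc hy) _]
      simp [hy]
    · subst hy
      have harg : ∀ l : ZMod p,
          (x ^ 3 + a * x ^ 2 + l * x + c) * ((0 : ZMod p) ^ 3 + a * 0 ^ 2 + l * 0 + c)
            = (c * x) * l + c * (x ^ 3 + a * x ^ 2 + c) := by intro l; ring
      rw [Finset.sum_congr rfl fun l _ => congrArg (fun t => (σ t : ℤ)) (harg l)]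
      rw [my_affine hp (mul_ne_zero hc hx) _]
      simp [hx]
    · have harg : ∀ l : ZMod p,
          (x ^ 3 + a * x ^ 2 + l * x + c) * (y ^ 3 + a * y ^ 2 + l * y + c)
            = (x * l + (x ^ 3 + a * x ^ 2 + c)) * (y * l + (y ^ 3 + a * y ^ 2 + c)) := by
        intro l; ring
      rw [Finset.sum_congr rfl fun l _ => congrArg (fun t => (σ t : ℤ)) (harg l)]
      rw [my_L4 hp hx hy _ _]
      rw [if_neg (by tauto : ¬(x = 0 ∧ y = 0)), add_zero]
      have hcond : ((y ^ 3 + a * y ^ 2 + c) * x = (x ^ 3 + a * x ^ 2 + c) * y)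
          ↔ ((x - y) * (x * y * (x + y + a) - c) = 0) := by
        constructor
        · intro h; linear_combination -h
        · intro h; linear_combination -h
      by_cases hvc : (y ^ 3 + a * y ^ 2 + c) * x = (x ^ 3 + a * x ^ 2 + c) * y
      · rw [if_pos hvc, if_pos (hcond.mp hvc)]; ring
      · rw [if_neg hvc, if_neg (fun h => hvc (hcond.mpr h))]; ring
  rw [Finset.sum_congr rfl fun x (_ : x ∈ univ) => Finset.sum_congr rfl fun y _ => hFR x y]
  rw [Finset.sum_congr rfl fun x (_ : x ∈ univ) => Finset.sum_add_distrib, Finset.sum_add_distrib]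
  -- the (0,0) correction term sums to p
  have htop : ∑ x : ZMod p, ∑ y : ZMod p, (if x = 0 ∧ y = 0 then (p : ℤ) else 0) = p := by
    simp [ite_and]
  rw [htop]
  rw [Finset.sum_congr rfl fun x (_ : x ∈ univ) => Finset.sum_add_distrib, Finset.sum_add_distrib]
  -- main term: -sum of sigma(xy) vanishes
  have hzero : ∑ x : ZMod p, ∑ y : ZMod p, -(σ (x * y) : ℤ) = 0 := by
    rw [Finset.sum_eq_zero]
    intro x _
    have : ∀ y : ZMod p, -(σ (x * y) : ℤ) = -((σ x : ℤ) * σ y) := by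
      intro y; rw [map_mul]
    rw [Finset.sum_congr rfl fun y _ => this y]
    rw [Finset.sum_neg_distrib, ← Finset.mul_sum, my_sum0 hp, mul_zero, neg_zero]
  rw [hzero, zero_add]
  -- pull out the factor p
  have hpull : ∑ x : ZMod p, ∑ y : ZMod p,
      (p : ℤ) * ((σ (x * y) : ℤ) * (if (x - y) * (x * y * (x + y + a) - c) = 0 then 1 else 0))
      = (p : ℤ) * ∑ x : ZMod p, ∑ y : ZMod p,
        ((σ (x * y) : ℤ) * (if (x - y) * (x * y * (x + y + a) - c) = 0 then 1 else 0)) := by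
    rw [Finset.mul_sum]
    exact Finset.sum_congr rfl fun x _ => by rw [Finset.mul_sum]
  rw [hpull]
  -- split the indicator
  have hsplit : ∀ x y : ZMod p,
      (σ (x * y) : ℤ) * (if (x - y) * (x * y * (x + y + a) - c) = 0 then 1 else 0)
      = ((if y = x then (σ (x * y) : ℤ) else 0)
          + (σ (x * y) : ℤ) * (if x * y * (x + y + a) - c = 0 then 1 else 0))
        - (if y = x then (σ (x * y) : ℤ) * (if x * y * (x + y + a) - c = 0 then 1 else 0) else 0) := by
    intro x y
    by_cases h1 : y = x
    · subst h1
      rw [if_pos rfl, if_pos rfl, if_pos (by rw [sub_self, zero_mul])]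
      ring
    · have h2 : ((x - y) * (x * y * (x + y + a) - c) = 0) ↔ (x * y * (x + y + a) - c = 0) := by
        rw [mul_eq_zero, sub_eq_zero]
        exact or_iff_right (fun h => h1 h.symm)
      rw [if_neg h1, if_neg h1]
      rw [show ((if (x - y) * (x * y * (x + y + a) - c) = 0 then (1:ℤ) else 0)
          = (if x * y * (x + y + a) - c = 0 then (1:ℤ) else 0)) from by rw [if_congr h2 rfl rfl]]
      ring
  rw [Finset.sum_congr rfl fun x (_ : x ∈ univ) => Finset.sum_congr rfl fun y _ => hsplit x y]
  rw [Finset.sum_congr rfl fun x (_ : x ∈ univ) => Finset.sum_sub_distrib _ _, Finset.sum_sub_distrib]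
  rw [Finset.sum_congr rfl fun x (_ : x ∈ univ) => Finset.sum_add_distrib, Finset.sum_add_distrib]
  -- S1
  have hS1 : ∑ x : ZMod p, ∑ y : ZMod p, (if y = x then (σ (x * y) : ℤ) else 0) = (p : ℤ) - 1 := by
    rw [Finset.sum_congr rfl fun x (_ : x ∈ univ) => Finset.sum_ite_eq' univ x (fun y => (σ (x * y) : ℤ))]
    simp only [Finset.mem_univ, if_true]
    exact my_sumsq hp
  -- S3
  have hS3 : ∑ x : ZMod p, ∑ y : ZMod p,
      (if y = x then (σ (x * y) : ℤ) * (if x * y * (x + y + a) - c = 0 then 1 else 0) else 0)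
      = ((univ.filter fun X : ZMod p => X ^ 3 + a * X ^ 2 - 4 * c = 0).card : ℤ) := by
    rw [Finset.sum_congr rfl fun x (_ : x ∈ univ) => Finset.sum_ite_eq' univ x
      (fun y => (σ (x * y) : ℤ) * (if x * y * (x + y + a) - c = 0 then 1 else 0))]
    simp only [Finset.mem_univ, if_true]
    have pw : ∀ x : ZMod p, (σ (x * x) : ℤ) * (if x * x * (x + x + a) - c = 0 then 1 else 0)
        = (if x * x * (x + x + a) - c = 0 then 1 else 0) := by
      intro x
      by_cases hcnd : x * x * (x + x + a) - c = 0
      · have hx0 : x ≠ 0 := by rintro rfl; exact hc (by linear_combination -hcnd)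
        rw [if_pos hcnd, my_sq1 hx0, one_mul]
      · rw [if_neg hcnd, mul_zero]
    rw [Finset.sum_congr rfl fun x _ => pw x]
    rw [Finset.sum_boole, ← my_card3 hp a c]
  rw [hS1, hS3, my_P hp a c hc]
  ring

lemma my_E (hp : 3 < p) (a c : ZMod p) (hc : c ≠ 0) :
    ∑ l : ZMod p, ∑ x : ZMod p, σ (x ^ 3 + a * x ^ 2 + l * x + c)
      = (p : ℤ) * σ c := by
  rw [Finset.sum_comm]
  rw [Finset.sum_eq_single (0 : ZMod p) ?h0 (fun h => absurd (Finset.mem_univ 0) h)]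
  · have harg : ∀ l : ZMod p, ((0 : ZMod p) ^ 3 + a * 0 ^ 2 + l * 0 + c) = c := by
      intro l; ring
    rw [Finset.sum_congr rfl fun l _ => congrArg (fun t => (σ t : ℤ)) (harg l)]
    simp [ZMod.card, mul_comm]
  case h0 =>
    intro x _ hx
    have harg : ∀ l : ZMod p, (x ^ 3 + a * x ^ 2 + l * x + c) = x * l + (x ^ 3 + a * x ^ 2 + c) := by
      intro l; ring
    rw [Finset.sum_congr rfl fun l _ => congrArg (fun t => (σ t : ℤ)) (harg l)]
    exact my_affine hp hx _

end

theorem stmt7 (p : ℕ) [Fact p.Prime] (hp : 3 < p) (a c : ZMod p) (hc : c ≠ 0) :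
    ((((∑ l : ZMod p, (∑ x : ZMod p, quadraticChar (ZMod p) (x ^ 3 + a * x ^ 2 + l * x + c)) ^ 2) : ℤ) : ℚ) / p) -
      ((((∑ l : ZMod p, ∑ x : ZMod p, quadraticChar (ZMod p) (x ^ 3 + a * x ^ 2 + l * x + c)) : ℤ) : ℚ) / p) ^ 2
      = p - 1 - quadraticChar (ZMod p) (-1)
        - ((Finset.univ.filter fun x : ZMod p => x ^ 3 + a * x ^ 2 - 4 * c = 0).card : ℚ)
        + quadraticChar (ZMod p) c * ((∑ x : ZMod p, quadraticChar (ZMod p) (x ^ 3 + a * x ^ 2 - 4 * c) : ℤ) : ℚ) := by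
  rw [my_T hp a c hc, my_E hp a c hc]
  have hσ : ((quadraticChar (ZMod p) c : ℤ) : ℚ) ^ 2 = 1 := by
    have := quadraticChar_sq_one hc
    push_cast [this]
    norm_cast
  have hp0 : (p : ℚ) ≠ 0 := by
    have := (Fact.out : p.Prime).pos
    positivity
  push_cast
  field_simp
  linear_combination (-1 : ℚ) * hσ
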